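/- arXiv:2007.09173 — 5 statements merged into one kernel-verified Lean document; each statement's English description precedes it below -/
import Mathlib

section
/- Let (X, ρ) be a metric space, λ ∈ Δ∞, and x = (x_k)_{k∈ℕ} a sequence in X. Then x is λ-statistically convergent to L ∈ X if and only if there exists a set G = {q_1 < q_2 < q_3 < ...} ⊆ ℕ with λ-density d_λ(G) = 1 such that the subsequence (x_{q_n})_{n∈ℕ} converges to L in the metric topology. (This is the paper's Theorem 3.4, specialized to the PM space induced by a metric, where F_{xy} = ε_{ρ(x,y)} and the strong topology is the metric topology.) -/
open Filter Topology

/-- `l` belongs to the class `Δ∞`: a nondecreasing (for indices `≥ 1`) sequence of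
positive reals tending to `∞` with `l 1 = 1` and `l (n+1) ≤ l n + 1`. -/
def DeltaInfty (l : ℕ → ℝ) : Prop :=
  (∀ n, 1 ≤ n → 0 < l n) ∧ (∀ m n, 1 ≤ m → m ≤ n → l m ≤ l n) ∧
    Tendsto l atTop atTop ∧ l 1 = 1 ∧ ∀ n, 1 ≤ n → l (n + 1) ≤ l n + 1

open Classical in
/-- The number of elements of `M` in the window `I_n = [n - l n + 1, n] ∩ ℕ`. -/
noncomputable def lamCount (l : ℕ → ℝ) (M : Set ℕ) (n : ℕ) : ℕ :=
  ((Finset.Icc 1 n).filter (fun (k : ℕ) => ((n : ℝ) - l n + 1 ≤ (k : ℝ)) ∧ k ∈ M)).card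

/-- `M ⊆ ℕ` has `λ`-density `r`: `|{k ∈ I_n : k ∈ M}| / l n → r`. -/
def lamDensity (l : ℕ → ℝ) (M : Set ℕ) (r : ℝ) : Prop :=
  Tendsto (fun n => (lamCount l M n : ℝ) / l n) atTop (𝓝 r)

/-- `x` is `λ`-statistically convergent to `L` in the metric space `X`. -/
def LamStatConv {X : Type*} [MetricSpace X] (l : ℕ → ℝ) (x : ℕ → X) (L : X) : Prop :=
  ∀ ε > 0, lamDensity l {k | ε ≤ dist (x k) L} 0

section lems
variable {l : ℕ → ℝ} (hl : DeltaInfty l)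
include hl

lemma l_le_n : ∀ n, 1 ≤ n → l n ≤ n := by
  intro n hn
  induction n with
  | zero => omega
  | succ m ih =>
    cases Nat.eq_zero_or_pos m with
    | inl h => subst h; rw [hl.2.2.2.1]; norm_num
    | inr hm =>
      have h1 := hl.2.2.2.2 m hm
      have h2 := ih hm
      push_cast
      linarith

lemma one_le_l (n : ℕ) (hn : 1 ≤ n) : 1 ≤ l n := by
  have := hl.2.1 1 n le_rfl hn
  rw [hl.2.2.2.1] at this
  linarith

open Classical in
lemma lamCount_univ (n : ℕ) (hn : 1 ≤ n) :
    lamCount l Set.univ n = ⌊l n⌋₊ := by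
  have hln : 0 < l n := hl.1 n hn
  have h1 : 1 ≤ ⌊l n⌋₊ := Nat.le_floor (by exact_mod_cast one_le_l hl n hn)
  have hfn : ⌊l n⌋₊ ≤ n := Nat.floor_le_of_le (l_le_n hl n hn)
  rw [lamCount]
  calc _ = (Finset.Icc (n + 1 - ⌊l n⌋₊) n).card := by
        congr 1
        ext k
        simp only [Finset.mem_filter, Finset.mem_Icc, Set.mem_univ, and_true]
        constructor
        · rintro ⟨⟨hk1, hk2⟩, hk3⟩
          refine ⟨?_, hk2⟩
          have hcast : ((n + 1 - k : ℕ) : ℝ) = (n : ℝ) + 1 - k := by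
            push_cast [Nat.cast_sub (by omega : k ≤ n + 1)]; ring
          have : (n + 1 - k : ℕ) ≤ ⌊l n⌋₊ := Nat.le_floor (by rw [hcast]; linarith)
          omega
        · rintro ⟨hk1, hk2⟩
          have hk0 : 1 ≤ k := by omega
          refine ⟨⟨hk0, hk2⟩, ?_⟩
          have h2 : (n + 1 - k : ℕ) ≤ ⌊l n⌋₊ := by omega
          have hcast : ((n + 1 - k : ℕ) : ℝ) = (n : ℝ) + 1 - k := by
            push_cast [Nat.cast_sub (by omega : k ≤ n + 1)]; ring
          have : ((n + 1 - k : ℕ) : ℝ) ≤ l n := le_trans (by exact_mod_cast h2) (Nat.floor_le hln.le)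
          rw [hcast] at this
          linarith
    _ = ⌊l n⌋₊ := by rw [Nat.card_Icc]; omega

end lems

lemma lamCount_mono (l : ℕ → ℝ) {M N : Set ℕ} (h : M ⊆ N) (n : ℕ) :
    lamCount l M n ≤ lamCount l N n := by
  classical
  apply Finset.card_le_card
  intro k hk
  simp only [lamCount, Finset.mem_filter] at *
  exact ⟨hk.1, hk.2.1, h hk.2.2⟩

lemma lamCount_add_compl (l : ℕ → ℝ) (M : Set ℕ) (n : ℕ) :
    lamCount l M n + lamCount l Mᶜ n = lamCount l Set.univ n := by
  classical
  simp only [lamCount, Set.mem_compl_iff, Set.mem_univ, and_true]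
  rw [← Finset.filter_filter, ← Finset.filter_filter]
  exact Finset.card_filter_add_card_filter_not _

lemma lamCount_union_le (l : ℕ → ℝ) (A B : Set ℕ) (n : ℕ) :
    lamCount l (A ∪ B) n ≤ lamCount l A n + lamCount l B n := by
  classical
  simp only [lamCount]
  refine le_trans (Finset.card_le_card ?_) (Finset.card_union_le _ _)
  intro k hk
  simp only [Finset.mem_filter, Finset.mem_union, Set.mem_union] at *
  tauto

section dens
variable {l : ℕ → ℝ} (hl : DeltaInfty l)
include hl

lemma lamCount_le_l (M : Set ℕ) (n : ℕ) (hn : 1 ≤ n) : (lamCount l M n : ℝ) ≤ l n := by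
  have h := lamCount_mono l (Set.subset_univ M) n
  have h2 := lamCount_univ hl n hn
  calc (lamCount l M n : ℝ) ≤ (lamCount l Set.univ n : ℝ) := by exact_mod_cast h
    _ = (⌊l n⌋₊ : ℝ) := by rw [h2]
    _ ≤ l n := Nat.floor_le (hl.1 n hn).le

lemma tendsto_inv_l : Tendsto (fun n => 1 / l n) atTop (𝓝 0) :=
  tendsto_const_nhds.div_atTop hl.2.2.1

lemma lamDensity_univ : lamDensity l Set.univ 1 := by
  have h0 : Tendsto (fun n => 1 - 1 / l n) atTop (𝓝 1) := by
    have := (tendsto_const_nhds (x := (1:ℝ)) (f := atTop (α := ℕ))).sub (tendsto_inv_l hl)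
    simpa using this
  refine tendsto_of_tendsto_of_tendsto_of_le_of_le' h0 tendsto_const_nhds ?_ ?_
  · filter_upwards [eventually_ge_atTop 1] with n hn
    have hln : 0 < l n := hl.1 n hn
    rw [lamCount_univ hl n hn]
    have hfl : l n - 1 ≤ (⌊l n⌋₊ : ℝ) := (Nat.sub_one_lt_floor (l n)).le
    rw [show (1:ℝ) - 1 / l n = (l n - 1) / l n by field_simp]
    exact div_le_div_of_nonneg_right hfl hln.le
  · filter_upwards [eventually_ge_atTop 1] with n hn
    exact div_le_one_of_le₀ (lamCount_le_l hl _ n hn) (hl.1 n hn).le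

end dens

lemma lamCount_le_finite (l : ℕ → ℝ) {M : Set ℕ} (hM : M.Finite) (n : ℕ) :
    lamCount l M n ≤ hM.toFinset.card := by
  classical
  unfold lamCount
  refine Finset.card_le_card fun k hk => ?_
  simp only [Finset.mem_filter] at hk
  exact hM.mem_toFinset.mpr hk.2.2

section dens2
variable {l : ℕ → ℝ} (hl : DeltaInfty l)
include hl

lemma lamDensity_of_finite {M : Set ℕ} (hM : M.Finite) : lamDensity l M 0 := by
  have hC : Tendsto (fun _ : ℕ => (hM.toFinset.card : ℝ)) atTop (𝓝 (hM.toFinset.card : ℝ)) :=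
    tendsto_const_nhds
  have hup : Tendsto (fun n => (hM.toFinset.card : ℝ) / l n) atTop (𝓝 0) :=
    hC.div_atTop hl.2.2.1
  refine tendsto_of_tendsto_of_tendsto_of_le_of_le' tendsto_const_nhds hup ?_ ?_
  · filter_upwards [eventually_ge_atTop 1] with n hn
    exact div_nonneg (Nat.cast_nonneg _) (hl.1 n hn).le
  · filter_upwards [eventually_ge_atTop 1] with n hn
    apply div_le_div_of_nonneg_right _ (hl.1 n hn).le
    exact_mod_cast lamCount_le_finite l hM n

lemma lamDensity_compl {M : Set ℕ} {r : ℝ} (h : lamDensity l M r) :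
    lamDensity l Mᶜ (1 - r) := by
  have h2 := (lamDensity_univ hl).sub h
  refine h2.congr (fun n => ?_)
  have hc : (lamCount l Set.univ n : ℝ) = (lamCount l M n : ℝ) + (lamCount l Mᶜ n : ℝ) := by
    exact_mod_cast (lamCount_add_compl l M n).symm
  rw [hc, add_div]
  ring

end dens2

lemma lamCount_mono' (l : ℕ → ℝ) {A B : Set ℕ} (n : ℕ) (h : ∀ k, k ≤ n → k ∈ A → k ∈ B) :
    lamCount l A n ≤ lamCount l B n := by
  classical
  unfold lamCount
  refine Finset.card_le_card fun k hk => ?_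
  simp only [Finset.mem_filter, Finset.mem_Icc] at *
  exact ⟨hk.1, hk.2.1, h k hk.1.2 hk.2.2⟩

lemma lamCount_lt_le (l : ℕ → ℝ) (c n : ℕ) : lamCount l {m | m < c} n ≤ c := by
  classical
  unfold lamCount
  calc _ ≤ (Finset.range c).card := by
        refine Finset.card_le_card fun k hk => ?_
        simp only [Finset.mem_filter, Set.mem_setOf_eq, Finset.mem_range] at *
        exact hk.2.2
    _ = c := Finset.card_range c

lemma lamCount_le_inter_add (l : ℕ → ℝ) (A : Set ℕ) (c n : ℕ) :
    lamCount l A n ≤ lamCount l (A ∩ {m | c ≤ m}) n + c := by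
  have h1 : lamCount l A n ≤ lamCount l ((A ∩ {m | c ≤ m}) ∪ {m | m < c}) n := by
    refine lamCount_mono l (fun k hk => ?_) n
    by_cases hc : c ≤ k
    · exact Or.inl ⟨hk, hc⟩
    · exact Or.inr (by simp only [Set.mem_setOf_eq]; omega)
  refine le_trans h1 (le_trans (lamCount_union_le l _ _ n) ?_)
  exact Nat.add_le_add_left (lamCount_lt_le l c n) _

lemma backward_dir {X : Type*} [MetricSpace X] {l : ℕ → ℝ} (hl : DeltaInfty l)
    {x : ℕ → X} {L : X} {q : ℕ → ℕ} (hq : StrictMono q)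
    (hd : lamDensity l (Set.range q) 1) (hx : Tendsto (x ∘ q) atTop (𝓝 L)) :
    LamStatConv l x L := by
  intro ε hε
  set A : Set ℕ := {k | ε ≤ dist (x k) L} with hA
  obtain ⟨Nq, hNq⟩ := (Metric.tendsto_atTop).mp hx ε hε
  have hSfin : ({m | ε ≤ dist (x (q m)) L}).Finite := by
    refine Set.Finite.subset (Set.finite_Iio Nq) fun m hm => ?_
    by_contra hmn
    simp only [Set.mem_Iio, not_lt] at hmn
    have := hNq m hmn
    simp only [Function.comp_apply] at this
    exact absurd hm (by simp only [Set.mem_setOf_eq, not_le]; exact this)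
  have hFfin : (q '' {m | ε ≤ dist (x (q m)) L}).Finite := hSfin.image q
  have hsub : A ⊆ (Set.range q)ᶜ ∪ (q '' {m | ε ≤ dist (x (q m)) L}) := by
    intro k hk
    by_cases hkr : k ∈ Set.range q
    · obtain ⟨m, rfl⟩ := hkr
      exact Or.inr ⟨m, hk, rfl⟩
    · exact Or.inl hkr
  have hc : lamDensity l (Set.range q)ᶜ 0 := by
    have := lamDensity_compl hl hd
    simpa using this
  have hf : lamDensity l (q '' {m | ε ≤ dist (x (q m)) L}) 0 := lamDensity_of_finite hl hFfin
  have hup : Tendsto (fun n => (lamCount l (Set.range q)ᶜ n : ℝ) / l n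
      + (lamCount l (q '' {m | ε ≤ dist (x (q m)) L}) n : ℝ) / l n) atTop (𝓝 0) := by
    have := hc.add hf
    simpa using this
  refine tendsto_of_tendsto_of_tendsto_of_le_of_le' tendsto_const_nhds hup ?_ ?_
  · filter_upwards [eventually_ge_atTop 1] with n hn
    exact div_nonneg (Nat.cast_nonneg _) (hl.1 n hn).le
  · filter_upwards [eventually_ge_atTop 1] with n hn
    rw [← add_div]
    apply div_le_div_of_nonneg_right _ (hl.1 n hn).le
    have h1 : lamCount l A n ≤ lamCount l ((Set.range q)ᶜ ∪ (q '' {m | ε ≤ dist (x (q m)) L})) n :=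
      lamCount_mono l hsub n
    have h2 := lamCount_union_le l (Set.range q)ᶜ (q '' {m | ε ≤ dist (x (q m)) L}) n
    exact_mod_cast le_trans h1 h2

noncomputable def buildN (F : ℕ → ℕ → ℕ) : ℕ → ℕ
  | 0 => 0
  | (j+1) => max (buildN F j + 1) (F (j+1) (buildN F j))

lemma forward_dir {X : Type*} [MetricSpace X] {l : ℕ → ℝ} (hl : DeltaInfty l)
    {x : ℕ → X} {L : X} (h : LamStatConv l x L) :
    ∃ q : ℕ → ℕ, StrictMono q ∧ lamDensity l (Set.range q) 1 ∧
      Tendsto (x ∘ q) atTop (𝓝 L) := by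
  classical
  set K : ℕ → Set ℕ := fun j => {k | dist (x k) L < 1 / (j + 1)} with hKdef
  have hK : ∀ j : ℕ, lamDensity l (K j) 1 := by
    intro j
    have hpos : (0:ℝ) < 1 / ((j:ℝ) + 1) := by positivity
    have h0 := h (1/((j:ℝ)+1)) hpos
    have h1 := lamDensity_compl hl h0
    have hset : ({k | (1:ℝ)/((j:ℝ)+1) ≤ dist (x k) L})ᶜ = K j := by
      ext k; simp [hKdef, not_le]
    rw [hset] at h1
    simpa using h1
  have hKmono : ∀ i j : ℕ, i ≤ j → K j ⊆ K i := by
    intro i j hij k hk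
    simp only [hKdef, Set.mem_setOf_eq] at *
    refine lt_of_lt_of_le hk ?_
    apply one_div_le_one_div_of_le (by positivity)
    have : (i:ℝ) ≤ (j:ℝ) := by exact_mod_cast hij
    linarith
  have hex : ∀ j b : ℕ, ∃ M : ℕ, ∀ n, M ≤ n →
      (1 - 1/((j:ℝ)+1)) * l n ≤ (lamCount l (K j) n : ℝ) ∧ ((j:ℝ)+1) * ((b:ℝ)+1) ≤ l n := by
    intro j b
    have h1 : ∀ᶠ n in atTop, 1 - 1/((j:ℝ)+1) < (lamCount l (K j) n : ℝ) / l n := by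
      apply (hK j).eventually (eventually_gt_nhds ?_)
      have : (0:ℝ) < 1/((j:ℝ)+1) := by positivity
      linarith
    have h2 : ∀ᶠ n in atTop, ((j:ℝ)+1) * ((b:ℝ)+1) ≤ l n :=
      hl.2.2.1.eventually_ge_atTop _
    have h3 : ∀ᶠ n in atTop, 1 ≤ n := eventually_ge_atTop 1
    obtain ⟨M, hM⟩ := eventually_atTop.mp (h1.and (h2.and h3))
    refine ⟨M, fun n hn => ?_⟩
    obtain ⟨e1, e2, e3⟩ := hM n hn
    have hln : 0 < l n := hl.1 n e3
    exact ⟨((lt_div_iff₀ hln).mp e1).le, e2⟩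
  choose F hF using hex
  set N : ℕ → ℕ := buildN F with hNdef
  have hN0 : N 0 = 0 := rfl
  have hNsucc : ∀ j, N (j+1) = max (N j + 1) (F (j+1) (N j)) := fun j => rfl
  have hNmono : StrictMono N := strictMono_nat_of_lt_succ (fun j => by
    rw [hNsucc]; exact lt_of_lt_of_le (Nat.lt_succ_self _) (le_max_left _ _))
  have hNspec : ∀ j n, N (j+1) ≤ n →
      (1 - 1/((j:ℝ)+1+1)) * l n ≤ (lamCount l (K (j+1)) n : ℝ) ∧
      ((j:ℝ)+1+1) * ((N j : ℝ)+1) ≤ l n := by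
    intro j n hn
    have hFle : F (j+1) (N j) ≤ n := le_trans (le_trans (le_max_right _ _) (hNsucc j).ge) hn
    have := hF (j+1) (N j) n hFle
    push_cast at this
    convert this using 3 <;> push_cast <;> ring
  let b : ℕ → ℕ := fun m => Nat.findGreatest (fun j => N j ≤ m) m
  have hble : ∀ m, N (b m) ≤ m := fun m =>
    Nat.findGreatest_spec (P := fun j => N j ≤ m) (Nat.zero_le m) (by show N 0 ≤ m; rw [hN0]; exact Nat.zero_le m)
  have hblt : ∀ m, m < N (b m + 1) := by
    intro m
    by_contra hc
    push_neg at hc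
    have h1 : b m + 1 ≤ m := le_trans hNmono.le_apply hc
    have h2 : b m + 1 ≤ b m := Nat.le_findGreatest h1 hc
    omega
  have hbge : ∀ j m, N j ≤ m → j ≤ b m := by
    intro j m hjm
    by_contra hc
    push_neg at hc
    have h1 : N (b m + 1) ≤ N j := hNmono.monotone (by omega)
    have h2 := hblt m
    omega
  let G : Set ℕ := {m | m ∈ K (b m)}
  have hGK : ∀ j m, m ∈ G → N j ≤ m → m ∈ K j := fun j m hm hjm =>
    hKmono j (b m) (hbge j m hjm) hm
  have hGlow : ∀ j, 1 ≤ j → ∀ n, N j ≤ n → 1 - 2/((j:ℝ)+1) ≤ (lamCount l G n : ℝ) / l n := by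
    intro j hj n hn
    have hNj1 : 1 ≤ N j := by
      have := hNmono (show 0 < j from hj)
      omega
    have h1n : 1 ≤ n := le_trans hNj1 hn
    have hln : 0 < l n := hl.1 n h1n
    have hji : j ≤ b n := hbge j n hn
    obtain ⟨i', hi'⟩ : ∃ i', b n = i' + 1 := ⟨b n - 1, by omega⟩
    have hspec := hNspec i' n (by rw [← hi']; exact hble n)
    have hcount : lamCount l (K (b n)) n ≤ lamCount l G n + N i' := by
      refine le_trans (lamCount_le_inter_add l (K (b n)) (N i') n) ?_
      have hmono : lamCount l (K (b n) ∩ {m | N i' ≤ m}) n ≤ lamCount l G n := by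
        refine lamCount_mono' l n (fun k hk hkm => ?_)
        obtain ⟨hk1, hk2⟩ := hkm
        have hbk2 : b k ≤ b n := by
          by_contra hc
          push_neg at hc
          have h5 : N (b n + 1) ≤ N (b k) := hNmono.monotone (by omega)
          have h6 := hble k
          have h7 := hblt n
          omega
        exact hKmono (b k) (b n) hbk2 hk1
      omega
    have e1 : (1 - 1/((i':ℝ)+1+1)) * l n ≤ (lamCount l (K (b n)) n : ℝ) := by
      rw [hi']; exact hspec.1
    have e3 : (lamCount l (K (b n)) n : ℝ) ≤ (lamCount l G n : ℝ) + (N i' : ℝ) := by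
      exact_mod_cast hcount
    have e4 : (N i' : ℝ) + 1 ≤ l n / ((i':ℝ)+1+1) := by
      rw [le_div_iff₀ (by positivity)]
      nlinarith [hspec.2]
    have hr1 : (1 - 1/((i':ℝ)+1+1)) * l n = l n - l n / ((i':ℝ)+1+1) := by ring
    have hr2 : (1 - 2/((i':ℝ)+1+1)) * l n = l n - 2 * (l n / ((i':ℝ)+1+1)) := by ring
    have e5 : (1 - 2/((i':ℝ)+1+1)) * l n ≤ (lamCount l G n : ℝ) := by
      rw [hr2]; rw [hr1] at e1; linarith
    have e6 : 1 - 2/((i':ℝ)+1+1) ≤ (lamCount l G n : ℝ)/ l n := (le_div_iff₀ hln).mpr e5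
    refine le_trans ?_ e6
    have hji' : (j:ℝ) + 1 ≤ (i':ℝ)+1+1 := by
      have : j ≤ i' + 1 := hi' ▸ hji
      exact_mod_cast Nat.succ_le_succ this
    have hdd : (2:ℝ)/((i':ℝ)+1+1) ≤ 2/((j:ℝ)+1) := by
      apply div_le_div_of_nonneg_left (by norm_num) (by positivity) hji'
    linarith
  have hGle1 : ∀ n, 1 ≤ n → (lamCount l G n : ℝ) / l n ≤ 1 := fun n hn =>
    div_le_one_of_le₀ (lamCount_le_l hl G n hn) (hl.1 n hn).le
  have hdG : lamDensity l G 1 := by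
    rw [lamDensity, Metric.tendsto_atTop]
    intro ε hε
    obtain ⟨j0, hj0⟩ := exists_nat_one_div_lt (half_pos hε)
    have hjε : 2/(((j0+1 : ℕ):ℝ)+1) < ε := by
      push_cast
      have h1 : (1:ℝ)/((j0:ℝ)+1+1) ≤ 1/((j0:ℝ)+1) := by
        apply div_le_div_of_nonneg_left (by norm_num) (by positivity) (by linarith)
      have h2 : (2:ℝ)/((j0:ℝ)+1+1) = 2 * (1/((j0:ℝ)+1+1)) := by ring
      rw [h2]
      linarith
    refine ⟨max (N (j0+1)) 1, fun n hn => ?_⟩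
    have hn1 : 1 ≤ n := le_trans (le_max_right _ _) hn
    have hnj : N (j0+1) ≤ n := le_trans (le_max_left _ _) hn
    have hlow := hGlow (j0+1) (by omega) n hnj
    have hup := hGle1 n hn1
    rw [Real.dist_eq, abs_lt]
    constructor <;> linarith
  have hGinf : G.Infinite := by
    intro hfin
    have h0 := lamDensity_of_finite hl hfin
    exact zero_ne_one (tendsto_nhds_unique h0 hdG)
  have hGinf' : (setOf (· ∈ G)).Infinite := by exact hGinf
  refine ⟨Nat.nth (· ∈ G), Nat.nth_strictMono hGinf', ?_, ?_⟩
  · have hrange : Set.range (Nat.nth (· ∈ G)) = G := by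
      rw [Nat.range_nth_of_infinite hGinf']; simp
    rw [hrange]; exact hdG
  · rw [Metric.tendsto_atTop]
    intro ε hε
    obtain ⟨j0, hj0⟩ := exists_nat_one_div_lt hε
    refine ⟨N j0, fun n hn => ?_⟩
    have hqn : N j0 ≤ Nat.nth (· ∈ G) n :=
      le_trans hn (Nat.nth_strictMono hGinf').le_apply
    have hqG : Nat.nth (· ∈ G) n ∈ G := Nat.nth_mem_of_infinite hGinf' n
    have hK0 := hGK j0 _ hqG hqn
    simp only [hKdef, Set.mem_setOf_eq] at hK0
    calc dist ((x ∘ Nat.nth (· ∈ G)) n) L = dist (x (Nat.nth (· ∈ G) n)) L := rfl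
      _ < 1/((j0:ℝ)+1) := hK0
      _ < ε := hj0

theorem lamStatConv_iff_subseq {X : Type*} [MetricSpace X] (l : ℕ → ℝ)
    (hl : DeltaInfty l) (x : ℕ → X) (L : X) :
    LamStatConv l x L ↔
      ∃ q : ℕ → ℕ, StrictMono q ∧ lamDensity l (Set.range q) 1 ∧
        Tendsto (x ∘ q) atTop (𝓝 L) := by
  constructor
  · intro h
    exact forward_dir hl h
  · rintro ⟨q, hq, hd, hx⟩
    exact backward_dir hl hq hd hx
end

section
/- Let (X, ρ) be a metric space, λ ∈ Δ∞, and x = (x_k)_{k∈ℕ} a sequence in X. Then x is λ-statistically Cauchy if and only if for every η > 0 there exists a set G ⊆ ℕ with λ-density d_λ(G) = 0 such that ρ(x_m, x_n) < η for all m, n ∉ G. (Equivalence (1) ⇔ (2) of the paper's Lemma 3.6.) -/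
open Filter Topology

/-- `x` is `λ`-statistically Cauchy in the metric space `X`. -/
def LamStatCauchy {X : Type*} [MetricSpace X] (l : ℕ → ℝ) (x : ℕ → X) : Prop :=
  ∀ η > 0, ∃ N₀ : ℕ, lamDensity l {k | η ≤ dist (x k) (x N₀)} 0


lemma lamDensity_zero_of_subset (l : ℕ → ℝ) (hl : DeltaInfty l) {M G : Set ℕ}
    (h : M ⊆ G) (hG : lamDensity l G 0) : lamDensity l M 0 := by
  obtain ⟨hpos, -, -, -, -⟩ := hl
  refine tendsto_of_tendsto_of_tendsto_of_le_of_le' tendsto_const_nhds hG ?_ ?_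
  · filter_upwards [eventually_ge_atTop 1] with n hn
    exact div_nonneg (Nat.cast_nonneg _) (hpos n hn).le
  · filter_upwards [eventually_ge_atTop 1] with n hn
    have hln := (hpos n hn).le
    gcongr
    exact_mod_cast lamCount_mono l h n

lemma deltaInfty_le_self (l : ℕ → ℝ) (hl : DeltaInfty l) : ∀ n, 1 ≤ n → l n ≤ n := by
  obtain ⟨-, -, -, h1, hstep⟩ := hl
  intro n hn
  induction n, hn using Nat.le_induction with
  | base => simp [h1]
  | succ n hn ih =>
    have := hstep n hn
    push_cast
    linarith

theorem lamStatCauchy_iff_exists_small_exceptional_set {X : Type*} [MetricSpace X]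
    (l : ℕ → ℝ) (hl : DeltaInfty l) (x : ℕ → X) :
    LamStatCauchy l x ↔
      ∀ η > 0, ∃ G : Set ℕ, lamDensity l G 0 ∧
        ∀ m ∉ G, ∀ n ∉ G, dist (x m) (x n) < η := by
  constructor
  · intro h η hη
    obtain ⟨N₀, hN₀⟩ := h (η / 2) (by positivity)
    refine ⟨{k | η / 2 ≤ dist (x k) (x N₀)}, hN₀, ?_⟩
    intro m hm n hn
    simp only [Set.mem_setOf_eq, not_le] at hm hn
    calc dist (x m) (x n) ≤ dist (x m) (x N₀) + dist (x N₀) (x n) := dist_triangle _ _ _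
      _ < η / 2 + η / 2 := by rw [dist_comm (x N₀)]; linarith
      _ = η := by ring
  · intro h η hη
    obtain ⟨G, hG, hGdist⟩ := h η hη
    have hpos := hl.1
    have hmono := hl.2.1
    have htop := hl.2.2.1
    have h1 := hl.2.2.2.1
    have hex : ∃ N₀, N₀ ∉ G := by
      by_contra hall
      push_neg at hall
      -- then lamCount l G n ≥ ⌊l n⌋₊ for n ≥ 1, giving count / l n ≥ 1 - 1/l n → 1
      have hbound : ∀ᶠ n in atTop, 1 - 1 / l n ≤ (lamCount l G n : ℝ) / l n := by
        filter_upwards [eventually_ge_atTop 1] with n hn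
        have hln1 : (1 : ℝ) ≤ l n := by
          have := hmono 1 n le_rfl hn
          linarith [h1 ▸ this]
        have hlnn : l n ≤ n := deltaInfty_le_self l hl n hn
        set c := ⌊l n⌋₊ with hc
        have hc1 : 1 ≤ c := Nat.le_floor (by exact_mod_cast hln1)
        have hcn : c ≤ n := by
          have : (c : ℝ) ≤ n := le_trans (Nat.floor_le (by linarith)) hlnn
          exact_mod_cast this
        have hcard : c ≤ lamCount l G n := by
          unfold lamCount
          refine le_trans (le_of_eq ?_)
            (Finset.card_le_card (s := Finset.Icc (n - c + 1) n) ?_)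
          · rw [Nat.card_Icc]; omega
          · intro k hk
            simp only [Finset.mem_Icc] at hk
            simp only [Finset.mem_filter, Finset.mem_Icc]
            refine ⟨⟨by omega, hk.2⟩, ?_, hall k⟩
            have hk1 : ((n : ℝ) - c + 1) ≤ (k : ℝ) := by
              have : ((n - c + 1 : ℕ) : ℝ) ≤ (k : ℝ) := by exact_mod_cast hk.1
              rw [Nat.cast_add, Nat.cast_sub hcn] at this
              push_cast at this ⊢
              linarith
            have : (c : ℝ) ≤ l n := Nat.floor_le (by linarith)
            linarith
        have hfloor : l n - 1 ≤ (c : ℝ) := by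
          have := Nat.sub_one_lt_floor (l n)
          exact this.le
        have hlpos : 0 < l n := hpos n hn
        have : (l n - 1) / l n ≤ (lamCount l G n : ℝ) / l n := by
          have hcr : (c : ℝ) ≤ (lamCount l G n : ℝ) := by exact_mod_cast hcard
          gcongr <;> linarith
        calc 1 - 1 / l n = (l n - 1) / l n := by
              field_simp
          _ ≤ _ := this
      have hlim : Tendsto (fun n => 1 - 1 / l n) atTop (𝓝 1) := by
        have : Tendsto (fun n => 1 / l n) atTop (𝓝 0) := by
          simp only [one_div]; exact htop.inv_tendsto_atTop
        simpa using tendsto_const_nhds.sub this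
      have hle : (1 : ℝ) ≤ 0 := le_of_tendsto_of_tendsto hlim hG hbound
      linarith
    obtain ⟨N₀, hN₀⟩ := hex
    refine ⟨N₀, lamDensity_zero_of_subset l hl ?_ hG⟩
    intro k hk
    by_contra hkG
    exact absurd (hGdist k hkG N₀ hN₀) (not_lt.mpr hk)
end

section
/- Let (X, ρ) be a metric space, λ ∈ Δ∞, and x = (x_k)_{k∈ℕ} a sequence in X. Then x is λ-statistically Cauchy if and only if for every η > 0 the set {j ∈ ℕ : D_j(η) does not have λ-density zero} has λ-density zero, where D_j(η) = {k ∈ ℕ : ρ(x_k, x_j) ≥ η}. (Equivalence (1) ⇔ (3) of the paper's Lemma 3.6.) -/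
open Filter Topology

lemma lamDensity_zero_mono (l : ℕ → ℝ) (hl : DeltaInfty l) {M M' : Set ℕ} (h : M ⊆ M')
    (h' : lamDensity l M' 0) : lamDensity l M 0 := by
  classical
  have hpos := hl.1
  apply squeeze_zero' (g := fun n => (lamCount l M' n : ℝ) / l n)
  · filter_upwards [eventually_ge_atTop 1] with n hn
    exact div_nonneg (Nat.cast_nonneg _) (hpos n hn).le
  · filter_upwards [eventually_ge_atTop 1] with n hn
    have hc : (lamCount l M n : ℝ) ≤ lamCount l M' n := by
      have : lamCount l M n ≤ lamCount l M' n := by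
        unfold lamCount
        exact Finset.card_le_card <|
          Finset.monotone_filter_right _ (fun k _ hk => ⟨hk.1, h hk.2⟩)
      exact_mod_cast this
    gcongr
    exact (hpos n hn).le
  · exact h'

lemma lamCount_univ_ge (l : ℕ → ℝ) (hl : DeltaInfty l) (n : ℕ) (hn : 1 ≤ n) :
    l n - 1 ≤ (lamCount l Set.univ n : ℝ) := by
  classical
  have hpos := hl.1
  have hle : l n ≤ n := deltaInfty_le_self l hl n hn
  set f : ℕ := ⌊l n⌋₊ with hf
  have hfn : f ≤ n := by
    have := Nat.floor_le_floor hle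
    simpa using this
  set m : ℕ := n + 1 - f with hm
  have hm1 : 1 ≤ m := by omega
  have hsub : Finset.Icc m n ⊆
      (Finset.Icc 1 n).filter (fun (k : ℕ) => ((n : ℝ) - l n + 1 ≤ (k : ℝ)) ∧ k ∈ Set.univ) := by
    intro k hk
    simp only [Finset.mem_Icc] at hk
    refine Finset.mem_filter.mpr ⟨Finset.mem_Icc.mpr ⟨le_trans hm1 hk.1, hk.2⟩, ?_, trivial⟩
    have hmk : (m : ℝ) ≤ k := Nat.cast_le.mpr hk.1
    have hmr : (m : ℝ) = (n : ℝ) + 1 - f := by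
      rw [hm]; push_cast [Nat.cast_sub (by omega : f ≤ n + 1)]; ring
    have hfl : (f : ℝ) ≤ l n := Nat.floor_le (by linarith [hpos n hn])
    linarith
  have hcard : f ≤ lamCount l Set.univ n := by
    unfold lamCount
    calc f = (Finset.Icc m n).card := by rw [Nat.card_Icc]; omega
      _ ≤ _ := Finset.card_le_card (by convert hsub using 2)
  have := Nat.sub_one_lt_floor (l n)
  calc l n - 1 ≤ (f : ℝ) := this.le
    _ ≤ _ := Nat.cast_le.mpr hcard

theorem lamStatCauchy_iff_density_of_bad_indices {X : Type*} [MetricSpace X]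
    (l : ℕ → ℝ) (hl : DeltaInfty l) (x : ℕ → X) :
    LamStatCauchy l x ↔
      ∀ η > 0, lamDensity l {j | ¬ lamDensity l {k | η ≤ dist (x k) (x j)} 0} 0 := by
  have hpos := hl.1
  have htop := hl.2.2.1
  constructor
  · intro hC η hη
    obtain ⟨N₀, hA⟩ := hC (η / 2) (by positivity)
    refine lamDensity_zero_mono l hl ?_ hA
    intro j hj
    by_contra hjA
    simp only [Set.mem_setOf_eq, not_le] at hjA
    apply hj
    refine lamDensity_zero_mono l hl ?_ hA
    intro k hk
    simp only [Set.mem_setOf_eq] at hk ⊢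
    have h3 := dist_triangle (x k) (x N₀) (x j)
    have h4 := dist_comm (x N₀) (x j)
    linarith
  · intro h η hη
    by_contra hno
    push_neg at hno
    have huniv : lamDensity l Set.univ 0 := by
      have := h η hη
      have heq : {j | ¬ lamDensity l {k | η ≤ dist (x k) (x j)} 0} = Set.univ := by
        ext j; simpa using hno j
      rwa [heq] at this
    have hev : ∀ᶠ n in atTop, (1 : ℝ) / 2 ≤ (lamCount l Set.univ n : ℝ) / l n := by
      filter_upwards [eventually_ge_atTop 1, htop.eventually_ge_atTop 2] with n hn h2
      have hlp := hpos n hn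
      rw [le_div_iff₀ hlp]
      have := lamCount_univ_ge l hl n hn
      linarith
    have hlt : ∀ᶠ n in atTop, (lamCount l Set.univ n : ℝ) / l n < 1 / 2 := by
      have := huniv.eventually (gt_mem_nhds (by norm_num : (0:ℝ) < 1/2))
      simpa using this
    obtain ⟨n, h1, h2⟩ := (hev.and hlt).exists
    linarith
end

section
/- Let (X, ρ) be a metric space, λ ∈ Δ∞, and x = (x_k)_{k∈ℕ} a sequence in X. If x is λ-statistically Cauchy, then for each t > 0 there is a set H_t ⊆ ℕ with λ-density d_λ(H_t) = 0 such that ρ(x_k, x_j) < t for all k, j ∉ H_t. (This is the paper's Theorem 3.8, specialized to the PM space induced by a metric, where F_{xy} = ε_{ρ(x,y)} and the strong topology is the metric topology.) -/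
open Filter Topology

theorem lamStatCauchy_imp_exists_small_exceptional_set {X : Type*} [MetricSpace X]
    (l : ℕ → ℝ) (hl : DeltaInfty l) (x : ℕ → X)
    (hx : LamStatCauchy l x) :
    ∀ t > 0, ∃ H : Set ℕ, lamDensity l H 0 ∧
      ∀ k ∉ H, ∀ j ∉ H, dist (x k) (x j) < t := by
  intro t ht
  obtain ⟨N₀, hN₀⟩ := hx (t / 2) (by linarith)
  refine ⟨{k | t / 2 ≤ dist (x k) (x N₀)}, hN₀, ?_⟩
  intro k hk j hj
  simp only [Set.mem_setOf_eq, not_le] at hk hj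
  calc dist (x k) (x j) ≤ dist (x k) (x N₀) + dist (x N₀) (x j) := dist_triangle _ _ _
    _ < t / 2 + t / 2 := by rw [dist_comm (x N₀)]; linarith
    _ = t := by ring
end

section
/- Let (X, ρ) be a metric space, λ ∈ Δ∞, and x = (x_k)_{k∈ℕ} a sequence in X. Then Λ_x(λ) ⊆ Γ_x(λ) ⊆ L_x, i.e., every λ-statistical limit point of x is a λ-statistical cluster point of x, and every λ-statistical cluster point of x is an ordinary limit point of x. (This is the paper's Theorem 4.1, specialized to the PM space induced by a metric, where F_{xy} = ε_{ρ(x,y)} and the strong topology is the metric topology.) -/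
open Filter Topology

/-- `L` is a `λ`-statistical limit point of `x`: some subsequence of `x`, indexed (in
increasing order) by an infinite set that does not have `λ`-density zero, converges to `L`. -/
def LamStatLimitPt {X : Type*} [MetricSpace X] (l : ℕ → ℝ) (x : ℕ → X) (L : X) : Prop :=
  ∃ φ : ℕ → ℕ, StrictMono φ ∧ ¬ lamDensity l (Set.range φ) 0 ∧
    Tendsto (x ∘ φ) atTop (𝓝 L)

/-- `Y` is a `λ`-statistical cluster point of `x`: for every `t > 0` the set
`{k : dist (x k) Y < t}` does not have `λ`-density zero. -/
def LamStatClusterPt {X : Type*} [MetricSpace X] (l : ℕ → ℝ) (x : ℕ → X) (Y : X) : Prop :=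
  ∀ t > 0, ¬ lamDensity l {k | dist (x k) Y < t} 0

/-- `L` is an ordinary limit point of `x`: some subsequence of `x` converges to `L`. -/
def SeqLimitPt {X : Type*} [MetricSpace X] (x : ℕ → X) (L : X) : Prop :=
  ∃ φ : ℕ → ℕ, StrictMono φ ∧ Tendsto (x ∘ φ) atTop (𝓝 L)

lemma lamCount_le_add (l : ℕ → ℝ) {A B : Set ℕ} (s : Finset ℕ) (h : A ⊆ B ∪ ↑s) (n : ℕ) :
    lamCount l A n ≤ lamCount l B n + s.card := by
  classical
  unfold lamCount
  calc ((Finset.Icc 1 n).filter (fun (k : ℕ) => ((n : ℝ) - l n + 1 ≤ (k : ℝ)) ∧ k ∈ A)).card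
      ≤ (((Finset.Icc 1 n).filter (fun (k : ℕ) => ((n : ℝ) - l n + 1 ≤ (k : ℝ)) ∧ k ∈ B)) ∪ s).card := by
        apply Finset.card_le_card
        intro k hk
        simp only [Finset.mem_filter, Finset.mem_union] at hk ⊢
        rcases h hk.2.2 with hb | hs
        · exact Or.inl ⟨hk.1, hk.2.1, hb⟩
        · exact Or.inr hs
    _ ≤ _ := Finset.card_union_le _ _

lemma lamDensity_zero_of_le (l : ℕ → ℝ) (hl : DeltaInfty l) {A B : Set ℕ} (c : ℕ)
    (hle : ∀ n, lamCount l A n ≤ lamCount l B n + c)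
    (hB : lamDensity l B 0) : lamDensity l A 0 := by
  obtain ⟨hpos, _, htop, _, _⟩ := hl
  have hc : Tendsto (fun n => (c : ℝ) / l n) atTop (𝓝 0) :=
    Tendsto.div_atTop tendsto_const_nhds htop
  have hg : Tendsto (fun n => (lamCount l B n : ℝ) / l n + (c : ℝ) / l n) atTop (𝓝 0) := by
    simpa using hB.add hc
  refine squeeze_zero' ?_ ?_ hg
  · filter_upwards [eventually_ge_atTop 1] with n hn
    have := hpos n hn
    positivity
  · filter_upwards [eventually_ge_atTop 1] with n hn
    have hlpos := hpos n hn
    rw [← add_div]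
    gcongr
    exact_mod_cast hle n

lemma lamDensity_zero_of_finite (l : ℕ → ℝ) (hl : DeltaInfty l) {A : Set ℕ}
    (hA : A.Finite) : lamDensity l A 0 := by
  classical
  refine lamDensity_zero_of_le l hl (B := (∅ : Set ℕ)) hA.toFinset.card ?_ ?_
  · intro n
    have := lamCount_le_add l (A := A) (B := (∅ : Set ℕ)) hA.toFinset
      (by intro k hk; exact Or.inr (by simpa using hA.mem_toFinset.mpr hk)) n
    simpa using this
  · have h0 : ∀ n, lamCount l (∅ : Set ℕ) n = 0 := by
      intro n; unfold lamCount; simp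
    unfold lamDensity
    simp only [h0]
    simpa using tendsto_const_nhds

theorem lamStatLimitPt_subset_clusterPt_subset_limitPt {X : Type*} [MetricSpace X]
    (l : ℕ → ℝ) (hl : DeltaInfty l) (x : ℕ → X) :
    {L | LamStatLimitPt l x L} ⊆ {Y | LamStatClusterPt l x Y} ∧
      {Y | LamStatClusterPt l x Y} ⊆ {L | SeqLimitPt x L} := by
  classical
  constructor
  · rintro L ⟨φ, hφ, hB, hlim⟩ t ht h0
    obtain ⟨N, hN⟩ := (Metric.tendsto_atTop.mp hlim) t ht
    apply hB
    refine lamDensity_zero_of_le l hl (B := {k | dist (x k) L < t})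
      ((Finset.range N).image φ).card (fun n => ?_) h0
    apply lamCount_le_add
    rintro k ⟨m, rfl⟩
    by_cases hm : N ≤ m
    · exact Or.inl (hN m hm)
    · exact Or.inr (by
        simp only [Finset.coe_image, Finset.coe_range, Set.mem_image, Set.mem_Iio]
        exact ⟨m, by omega, rfl⟩)
  · rintro Y hY
    have hinf : ∀ m : ℕ, ∃ᶠ k in atTop, dist (x k) Y < 1 / (m + 1) := by
      intro m
      rw [Nat.frequently_atTop_iff_infinite]
      intro hfin
      exact hY (1 / (m + 1)) (by positivity) (lamDensity_zero_of_finite l hl hfin)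
    obtain ⟨φ, hφ, hφ2⟩ := Filter.extraction_forall_of_frequently hinf
    refine ⟨φ, hφ, Metric.tendsto_atTop.mpr fun ε hε => ?_⟩
    obtain ⟨N, hN⟩ := exists_nat_one_div_lt hε
    refine ⟨N, fun n hn => lt_of_lt_of_le (hφ2 n) (le_trans ?_ hN.le)⟩
    apply one_div_le_one_div_of_le (by positivity)
    have : (N : ℝ) ≤ n := by exact_mod_cast hn
    linarith
end
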